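/- Let ε : ℝ^d → ℝ be 2π-periodic and analytic in a strip of width δ > 0, and let c(γ₁) = sup_{k∈T^d, |Im κ|≤γ₁} |Im ε(k+κ)|. Then the matrix elements of the free propagator on ℓ²(ℤ^d) satisfy the exponential decay bound |(e^{-itε(P)})(x,x')| ≤ e^{t·c(γ₁)} · e^{-γ₁|x'-x|} for every 0 < γ₁ < δ, all t ≥ 0, and all x, x' ∈ ℤ^d. -/

import Mathlib

open MeasureTheory Complex Real

noncomputable section

/-- The Euclidean norm of the vector of imaginary parts of `κ ∈ ℂ^d`. -/
def imNorm {d : ℕ} (κ : Fin d → ℂ) : ℝ := Real.sqrt (∑ i, (κ i).im ^ 2)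

/-- The Euclidean norm of a lattice vector `x ∈ ℤ^d`. -/
def znorm {d : ℕ} (x : Fin d → ℤ) : ℝ := Real.sqrt (∑ i, ((x i : ℝ)) ^ 2)



lemma shift1d (f : ℂ → ℂ) (h : ℝ)
    (Hd : ∀ z : ℂ, z.re ∈ Set.Icc (-Real.pi) Real.pi → z.im ∈ Set.uIcc 0 h →
      DifferentiableAt ℂ f z)
    (Hper : ∀ z : ℂ, f (z + 2 * Real.pi) = f z) :
    ∫ u in Set.Icc (-Real.pi) Real.pi, f u
      = ∫ u in Set.Icc (-Real.pi) Real.pi, f (u + h * Complex.I) := by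
  have hpi : -Real.pi ≤ Real.pi := by linarith [Real.pi_pos]
  have key := Complex.integral_boundary_rect_eq_zero_of_differentiableOn f
    ((-Real.pi : ℝ) : ℂ) ((Real.pi : ℝ) + h * Complex.I) ?_
  · simp only [Complex.ofReal_re, Complex.ofReal_im, Complex.add_re, Complex.add_im,
      Complex.mul_re, Complex.mul_im, Complex.I_re, Complex.I_im, Complex.ofReal_neg] at key
    norm_num at key
    have hvert : ∀ y : ℝ, f ((Real.pi : ℂ) + (y : ℂ) * Complex.I)
        = f (-(Real.pi : ℂ) + (y : ℂ) * Complex.I) := by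
      intro y
      have := Hper (-(Real.pi : ℂ) + (y : ℂ) * Complex.I)
      rw [← this]; ring_nf
    simp only [hvert] at key
    have hint : (∫ x : ℝ in (-Real.pi)..Real.pi, f x)
        = ∫ x : ℝ in (-Real.pi)..Real.pi, f ((x : ℂ) + (h : ℂ) * Complex.I) := by
      linear_combination key
    rw [intervalIntegral.integral_of_le hpi, intervalIntegral.integral_of_le hpi] at hint
    rw [MeasureTheory.integral_Icc_eq_integral_Ioc, MeasureTheory.integral_Icc_eq_integral_Ioc]
    exact hint
  · rintro z ⟨hre, him⟩
    refine (Hd z ?_ ?_).differentiableWithinAt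
    · simpa [Set.uIcc_of_le hpi] using hre
    · simpa using him


lemma split_coord {n : ℕ} (j : Fin (n + 1)) (g : (Fin (n + 1) → ℝ) → ℂ)
    (hg : ContinuousOn (fun p : ℝ × (Fin n → ℝ) => g (j.insertNth p.1 p.2))
      (Set.Icc (-Real.pi) Real.pi ×ˢ Set.univ.pi fun _ : Fin n => Set.Icc (-Real.pi) Real.pi)) :
    ∫ k in Set.univ.pi fun _ : Fin (n+1) => Set.Icc (-Real.pi) Real.pi, g k
      = ∫ v in Set.univ.pi fun _ : Fin n => Set.Icc (-Real.pi) Real.pi,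
          ∫ u in Set.Icc (-Real.pi) Real.pi, g (j.insertNth u v) := by
  set P : Set (Fin n → ℝ) := Set.univ.pi fun _ => Set.Icc (-Real.pi) Real.pi with hP
  set S : Set (Fin (n+1) → ℝ) := Set.univ.pi fun _ => Set.Icc (-Real.pi) Real.pi with hS
  have hPm : MeasurableSet P := MeasurableSet.univ_pi fun _ => measurableSet_Icc
  have hSm : MeasurableSet S := MeasurableSet.univ_pi fun _ => measurableSet_Icc
  have hQm : MeasurableSet (Set.Icc (-Real.pi) Real.pi ×ˢ P) :=
    measurableSet_Icc.prod hPm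
  set e := MeasurableEquiv.piFinSuccAbove (fun _ : Fin (n+1) => ℝ) j with he
  have mp := measurePreserving_piFinSuccAbove (fun _ : Fin (n+1) => (volume : Measure ℝ)) j
  -- integrand on the product space
  set F : ℝ × (Fin n → ℝ) → ℂ := fun p => g (j.insertNth p.1 p.2) with hF
  have hmem : ∀ (u : ℝ) (v : Fin n → ℝ), j.insertNth u v ∈ S ↔ u ∈ Set.Icc (-Real.pi) Real.pi ∧ v ∈ P := by
    intro u v
    simp only [hS, hP, Set.mem_pi, Set.mem_univ, true_implies]
    rw [Fin.forall_iff_succAbove j]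
    simp
  have hind : ∀ p : ℝ × (Fin n → ℝ),
      S.indicator g (e.symm p) = (Set.Icc (-Real.pi) Real.pi ×ˢ P).indicator F p := by
    rintro ⟨u, v⟩
    have hesymm : e.symm (u, v) = j.insertNth u v := rfl
    by_cases h : u ∈ Set.Icc (-Real.pi) Real.pi ∧ v ∈ P
    · rw [hesymm, Set.indicator_of_mem ((hmem u v).2 h),
        Set.indicator_of_mem (Set.mem_prod.mpr h)]
    · rw [hesymm, Set.indicator_of_notMem (fun hm => h ((hmem u v).1 hm)),
        Set.indicator_of_notMem (fun hm => h (Set.mem_prod.mp hm))]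
  have hFi : Integrable ((Set.Icc (-Real.pi) Real.pi ×ˢ P).indicator F) (volume.prod volume) := by
    rw [← Measure.volume_eq_prod, integrable_indicator_iff hQm]
    exact hg.integrableOn_compact
      (isCompact_Icc.prod (isCompact_univ_pi fun _ => isCompact_Icc))
  calc ∫ k in S, g k = ∫ k, S.indicator g k := (integral_indicator hSm).symm
    _ = ∫ p, S.indicator g (e.symm p) ∂((volume : Measure ℝ).prod (volume : Measure (Fin n → ℝ))) := by
        exact ((MeasurePreserving.symm e mp).integral_comp e.symm.measurableEmbedding _).symm
    _ = ∫ p, (Set.Icc (-Real.pi) Real.pi ×ˢ P).indicator F p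
          ∂((volume : Measure ℝ).prod volume) := by
        exact integral_congr_ae (Filter.Eventually.of_forall hind)
    _ = ∫ v, ∫ u, (Set.Icc (-Real.pi) Real.pi ×ˢ P).indicator F (u, v) ∂volume ∂volume :=
        integral_prod_symm _ hFi
    _ = ∫ v, P.indicator (fun v => ∫ u in Set.Icc (-Real.pi) Real.pi, F (u, v)) v ∂volume := by
        refine integral_congr_ae (Filter.Eventually.of_forall fun v => ?_)
        by_cases hv : v ∈ P
        · rw [Set.indicator_of_mem hv, ← integral_indicator measurableSet_Icc]
          refine integral_congr_ae (Filter.Eventually.of_forall fun u => ?_)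
          beta_reduce
          by_cases hu : u ∈ Set.Icc (-Real.pi) Real.pi
          · rw [Set.indicator_of_mem (Set.mem_prod.mpr ⟨hu, hv⟩), Set.indicator_of_mem hu]
          · rw [Set.indicator_of_notMem (fun hm => hu (Set.mem_prod.mp hm).1),
              Set.indicator_of_notMem hu]
        · rw [Set.indicator_of_notMem hv]
          simp only [Set.indicator_apply, Set.mem_prod]
          refine integral_eq_zero_of_ae (Filter.Eventually.of_forall fun u => ?_)
          simp [hv]
    _ = ∫ v in P, ∫ u in Set.Icc (-Real.pi) Real.pi, g (j.insertNth u v) := by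
        rw [integral_indicator hPm]

lemma shift_coord {n : ℕ} (G : (Fin (n+1) → ℂ) → ℂ) (j : Fin (n+1))
    (χ : Fin (n+1) → ℝ) (h : ℝ) (hχj : χ j = 0)
    (Hd : ∀ z : Fin (n+1) → ℂ,
      (∀ i, (z i).im ∈ Set.uIcc (χ i) (Function.update χ j h i)) → DifferentiableAt ℂ G z)
    (Hper : ∀ z : Fin (n+1) → ℂ, G (Function.update z j (z j + 2 * Real.pi)) = G z) :
    ∫ k in Set.univ.pi fun _ : Fin (n+1) => Set.Icc (-Real.pi) Real.pi,
        G (fun i => (k i : ℂ) + (χ i : ℂ) * Complex.I)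
      = ∫ k in Set.univ.pi fun _ : Fin (n+1) => Set.Icc (-Real.pi) Real.pi,
        G (fun i => (k i : ℂ) + ((Function.update χ j h i : ℝ) : ℂ) * Complex.I) := by
  set χ' := Function.update χ j h with hχ'
  -- the complexified affine slice maps
  set A : (Fin n → ℝ) → ℂ → (Fin (n+1) → ℂ) := fun v w =>
    j.insertNth w (fun i' => (v i' : ℂ) + (χ (j.succAbove i') : ℂ) * Complex.I) with hA
  have hAim : ∀ (v : Fin n → ℝ) (w : ℂ), w.im ∈ Set.uIcc 0 h →
      ∀ i, ((A v w) i).im ∈ Set.uIcc (χ i) (χ' i) := by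
    intro v w hw i
    refine Fin.succAboveCases j ?_ ?_ i
    · simpa [hA, Fin.insertNth_apply_same, hχj, hχ', Function.update_self] using hw
    · intro i'
      have : χ' (j.succAbove i') = χ (j.succAbove i') :=
        Function.update_of_ne (Fin.succAbove_ne j i') _ _
      simp [hA, Fin.insertNth_apply_succAbove, this, Set.left_mem_uIcc]
  have hAdiff : ∀ (v : Fin n → ℝ) (w : ℂ), DifferentiableAt ℂ (A v) w := by
    intro v w
    rw [differentiableAt_pi]
    intro i
    refine Fin.succAboveCases j ?_ ?_ i
    · simp only [hA, Fin.insertNth_apply_same]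
      exact differentiableAt_id
    · intro i'
      simp only [hA, Fin.insertNth_apply_succAbove]
      exact differentiableAt_const _
  have hAcont : ∀ (v : Fin n → ℝ), Continuous fun p : ℝ × (Fin n → ℝ) =>
      A p.2 (p.1 : ℂ) := by
    intro _
    refine Continuous.finInsertNth j (Complex.continuous_ofReal.comp continuous_fst) ?_
    refine continuous_pi fun i' => ?_
    exact ((Complex.continuous_ofReal.comp ((continuous_apply i').comp continuous_snd)).add
      continuous_const)
  -- identify the two integrands along slices
  have hslice1 : ∀ (u : ℝ) (v : Fin n → ℝ),
      (fun i => (Complex.ofReal (j.insertNth (α := fun _ => ℝ) u v i)) + (χ i : ℂ) * Complex.I) = A v (u : ℂ) := by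
    intro u v
    funext i
    refine Fin.succAboveCases j ?_ ?_ i
    · simp [hA, Fin.insertNth_apply_same, hχj]
    · intro i'
      simp [hA, Fin.insertNth_apply_succAbove]
  have hslice2 : ∀ (u : ℝ) (v : Fin n → ℝ),
      (fun i => (Complex.ofReal (j.insertNth (α := fun _ => ℝ) u v i)) + ((χ' i : ℝ) : ℂ) * Complex.I)
        = A v ((u : ℂ) + (h : ℂ) * Complex.I) := by
    intro u v
    funext i
    refine Fin.succAboveCases j ?_ ?_ i
    · simp [hA, Fin.insertNth_apply_same, hχ', Function.update_self]
    · intro i'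
      have : χ' (j.succAbove i') = χ (j.succAbove i') :=
        Function.update_of_ne (Fin.succAbove_ne j i') _ _
      simp [hA, Fin.insertNth_apply_succAbove, this]
  -- continuity of the two integrands
  have hcont : ∀ ψ : ℂ → ℂ, (∀ w : ℂ, w.im ∈ Set.uIcc 0 h → DifferentiableAt ℂ (fun z => z) w) →
      True := fun _ _ => trivial
  have hGcont : ∀ (p : ℝ × (Fin n → ℝ)) (w : ℂ), w.im ∈ Set.uIcc 0 h →
      ContinuousAt G (A p.2 w) := by
    intro p w hw
    exact (Hd _ (hAim p.2 w hw)).continuousAt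
  have him0 : (0 : ℝ) ∈ Set.uIcc 0 h := Set.left_mem_uIcc
  have himh : h ∈ Set.uIcc 0 h := Set.right_mem_uIcc
  have key1 := split_coord j (fun k => G (fun i => (k i : ℂ) + (χ i : ℂ) * Complex.I)) ?_
  have key2 := split_coord j (fun k => G (fun i => (k i : ℂ) + ((χ' i : ℝ) : ℂ) * Complex.I)) ?_
  · rw [key1, key2]
    refine setIntegral_congr_fun (MeasurableSet.univ_pi fun _ => measurableSet_Icc)
      (fun v _ => ?_)
    have e1 : ∀ u : ℝ, G (fun i => (Complex.ofReal (j.insertNth (α := fun _ => ℝ) u v i)) + (χ i : ℂ) * Complex.I)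
        = (fun w => G (A v w)) (u : ℂ) := fun u => by rw [hslice1]
    have e2 : ∀ u : ℝ, G (fun i => (Complex.ofReal (j.insertNth (α := fun _ => ℝ) u v i)) + ((χ' i : ℝ) : ℂ) * Complex.I)
        = (fun w => G (A v w)) ((u : ℂ) + (h : ℂ) * Complex.I) := fun u => by rw [hslice2]
    simp only [e1, e2]
    refine shift1d (fun w => G (A v w)) h ?_ ?_
    · intro z _ hzim
      exact (Hd _ (hAim v z hzim)).comp z (hAdiff v z)
    · intro z
      have hup : A v (z + 2 * Real.pi) = Function.update (A v z) j ((A v z) j + 2 * Real.pi) := by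
        funext i
        refine Fin.succAboveCases j ?_ ?_ i
        · simp [hA, Fin.insertNth_apply_same, Function.update_self]
        · intro i'
          simp [hA, Fin.insertNth_apply_succAbove,
            Function.update_of_ne (Fin.succAbove_ne j i')]
      show G (A v (z + 2 * (Real.pi : ℂ))) = G (A v z)
      rw [hup, Hper]
  · refine fun p _ => (ContinuousAt.continuousWithinAt ?_)
    have hc2 : Continuous fun p : ℝ × (Fin n → ℝ) => A p.2 ((p.1 : ℂ) + (h : ℂ) * Complex.I) := by
      refine Continuous.finInsertNth j
        ((Complex.continuous_ofReal.comp continuous_fst).add continuous_const) ?_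
      exact continuous_pi fun i' =>
        ((Complex.continuous_ofReal.comp ((continuous_apply i').comp continuous_snd)).add
          continuous_const)
    have h1 := (Hd (A p.2 (((p.1 : ℝ) : ℂ) + (h : ℂ) * Complex.I))
      (hAim p.2 _ (by simpa using himh))).continuousAt
    refine ContinuousAt.congr (ContinuousAt.comp (x := p) h1 hc2.continuousAt) ?_
    exact Filter.Eventually.of_forall fun q => (congrArg G (hslice2 q.1 q.2)).symm
  · refine fun p _ => (ContinuousAt.continuousWithinAt ?_)
    have h1 := (Hd (A p.2 ((p.1 : ℝ) : ℂ)) (hAim p.2 _ (by simpa using him0))).continuousAt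
    refine ContinuousAt.congr (ContinuousAt.comp (x := p) h1 (hAcont p.2).continuousAt) ?_
    exact Filter.Eventually.of_forall fun q => (congrArg G (hslice1 q.1 q.2)).symm

lemma shift_all {d : ℕ} (G : (Fin d → ℂ) → ℂ) (η : Fin d → ℝ)
    (Hd : ∀ z : Fin d → ℂ, (∀ i, |(z i).im| ≤ |η i|) → DifferentiableAt ℂ G z)
    (Hper : ∀ (z : Fin d → ℂ) (j : Fin d),
      G (Function.update z j (z j + 2 * Real.pi)) = G z)
    (s : Finset (Fin d)) :
    ∫ k in Set.univ.pi fun _ : Fin d => Set.Icc (-Real.pi) Real.pi,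
        G (fun i => (k i : ℂ) + (((if i ∈ s then η i else 0 : ℝ)) : ℂ) * Complex.I)
      = ∫ k in Set.univ.pi fun _ : Fin d => Set.Icc (-Real.pi) Real.pi,
        G (fun i => (k i : ℂ) + (((0:ℝ)) : ℂ) * Complex.I) := by
  classical
  induction s using Finset.induction_on with
  | empty => simp
  | @insert j s hj ih =>
    rw [← ih]
    obtain ⟨n, rfl⟩ : ∃ n, d = n + 1 := by
      rcases d with - | n
      · exact j.elim0
      · exact ⟨n, rfl⟩
    have hupd : Function.update (fun i => if i ∈ s then η i else 0) j (η j)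
        = fun i => if i ∈ insert j s then η i else 0 := by
      funext i
      by_cases hij : i = j
      · subst hij; simp
      · simp [Function.update_of_ne hij, Finset.mem_insert, hij]
    have := shift_coord G j (fun i => if i ∈ s then η i else 0) (η j)
      (by simp [hj]) ?_ (fun z => Hper z j)
    · rw [hupd] at this
      exact this.symm
    · intro z hz
      refine Hd z fun i => ?_
      have h1 : |(if i ∈ s then η i else 0 : ℝ)| ≤ |η i| := by
        split <;> simp [abs_nonneg]
      have h2 : |Function.update (fun i => if i ∈ s then η i else 0) j (η j) i| ≤ |η i| := by
        by_cases hij : i = j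
        · subst hij; simp
        · rw [Function.update_of_ne hij]; exact h1
      rcases Set.mem_uIcc.mp (hz i) with ⟨ha, hb⟩ | ⟨ha, hb⟩
      · exact le_trans (abs_le_max_abs_abs ha hb) (max_le h1 h2)
      · exact le_trans (abs_le_max_abs_abs ha hb) (max_le h2 h1)

/-- Exponential decay of the matrix elements of the free propagator on `ℓ²(ℤ^d)`:
`|(e^{-itε(P)})(x,x')| = |(2π)^{-d} ∫_{T^d} e^{-itε(k)} e^{i(k, x'-x)} dk|
  ≤ e^{t c(γ₁)} e^{-γ₁ |x'-x|}` for `0 < γ₁ < δ` and `t ≥ 0`. -/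
theorem free_propagator_matrix_element_decay
    (d : ℕ) (E : (Fin d → ℂ) → ℂ)
    (hper : ∀ (z : Fin d → ℂ) (m : Fin d → ℤ),
      E (z + fun i => (2 * Real.pi : ℂ) * (m i : ℂ)) = E z)
    (hreal : ∀ x : Fin d → ℝ, (E fun i => (x i : ℂ)).im = 0)
    (δ γ₁ : ℝ) (hγ₁ : 0 < γ₁) (hγδ : γ₁ < δ)
    (hanal : DifferentiableOn ℂ E {z : Fin d → ℂ | imNorm z ≤ δ})
    (hbdd : ∃ Cb : ℝ, ∀ z : Fin d → ℂ, imNorm z ≤ δ → ‖E z‖ ≤ Cb)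
    (c : ℝ)
    (hc : ∀ (x : Fin d → ℝ) (κ : Fin d → ℂ), imNorm κ ≤ γ₁ →
      |(E fun i => (x i : ℂ) + κ i).im| ≤ c)
    (t : ℝ) (ht : 0 ≤ t) (x x' : Fin d → ℤ) :
    ‖((2 * Real.pi) ^ d)⁻¹ •
        ∫ k in Set.univ.pi fun _ : Fin d => Set.Icc (-Real.pi) Real.pi,
          Complex.exp (-Complex.I * t * E fun i => ((k : Fin d → ℝ) i : ℂ)) *
            Complex.exp (Complex.I * ∑ i, ((k : Fin d → ℝ) i : ℂ) * ((x' i - x i : ℤ) : ℂ))‖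
      ≤ Real.exp (t * c) * Real.exp (-γ₁ * znorm (x' - x)) := by
  classical
  set S : Set (Fin d → ℝ) := Set.univ.pi fun _ => Set.Icc (-Real.pi) Real.pi with hS
  set y : Fin d → ℝ := fun i => ((x' i - x i : ℤ) : ℝ) with hy
  set N : ℝ := znorm (x' - x) with hN
  have hNsq : N = Real.sqrt (∑ i, y i ^ 2) := by
    rw [hN, znorm]
    congr 1
  have hNnn : 0 ≤ N := by rw [hNsq]; exact Real.sqrt_nonneg _
  -- the shift vector
  set η : Fin d → ℝ := fun i => if (∑ i, y i ^ 2) = 0 then 0 else γ₁ * y i / N with hη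
  have hssq_nonneg : (0:ℝ) ≤ ∑ i, y i ^ 2 := Finset.sum_nonneg fun i _ => sq_nonneg _
  have hη_sq : Real.sqrt (∑ i, η i ^ 2) ≤ γ₁ := by
    by_cases h0 : (∑ i, y i ^ 2) = 0
    · simp [hη, h0, Real.sqrt_zero, le_of_lt hγ₁]
    · have hNpos : 0 < N := by
        rw [hNsq]
        exact Real.sqrt_pos.mpr (lt_of_le_of_ne hssq_nonneg (Ne.symm h0))
      have hsum : ∑ i, η i ^ 2 = γ₁ ^ 2 := by
        have hNsq2 : N ^ 2 = ∑ i, y i ^ 2 := by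
          rw [hNsq]; exact Real.sq_sqrt hssq_nonneg
        have : ∑ i, η i ^ 2 = γ₁ ^ 2 / N ^ 2 * ∑ i, y i ^ 2 := by
          rw [Finset.mul_sum]
          refine Finset.sum_congr rfl fun i _ => ?_
          simp only [hη, if_neg h0]
          field_simp
        rw [this, hNsq2]
        field_simp
      rw [hsum, Real.sqrt_sq hγ₁.le]
  have hη_dot : ∑ i, η i * y i = γ₁ * N := by
    by_cases h0 : (∑ i, y i ^ 2) = 0
    · have hN0 : N = 0 := by rw [hNsq, h0, Real.sqrt_zero]
      simp [hη, h0, hN0]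
    · have hNpos : 0 < N := by
        rw [hNsq]
        exact Real.sqrt_pos.mpr (lt_of_le_of_ne hssq_nonneg (Ne.symm h0))
      have hNsq2 : N ^ 2 = ∑ i, y i ^ 2 := by
        rw [hNsq]; exact Real.sq_sqrt hssq_nonneg
      have : ∑ i, η i * y i = γ₁ / N * ∑ i, y i ^ 2 := by
        rw [Finset.mul_sum]
        refine Finset.sum_congr rfl fun i _ => ?_
        simp only [hη, if_neg h0]
        field_simp
      rw [this, ← hNsq2]
      field_simp
  -- the analytic integrand
  set F : (Fin d → ℂ) → ℂ := fun z =>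
    Complex.exp (-Complex.I * t * E z) *
      Complex.exp (Complex.I * ∑ i, z i * ((x' i - x i : ℤ) : ℂ)) with hF
  -- differentiability of F where |Im z i| ≤ |η i|
  have hopen : IsOpen {z : Fin d → ℂ | imNorm z < δ} := by
    have hcont : Continuous fun z : Fin d → ℂ => imNorm z := by
      refine Real.continuous_sqrt.comp ?_
      exact continuous_finset_sum _ fun i _ =>
        ((Complex.continuous_im.comp (continuous_apply i)).pow 2)
    exact isOpen_lt hcont continuous_const
  have hEdiff : ∀ z : Fin d → ℂ, imNorm z < δ → DifferentiableAt ℂ E z := by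
    intro z hz
    exact (hanal.mono fun w (hw : imNorm w < δ) => le_of_lt hw).differentiableAt
      (hopen.mem_nhds hz)
  have hFdiff : ∀ z : Fin d → ℂ, (∀ i, |(z i).im| ≤ |η i|) → DifferentiableAt ℂ F z := by
    intro z hz
    have himz : imNorm z ≤ γ₁ := by
      refine le_trans (le_trans (Real.sqrt_le_sqrt ?_) hη_sq) le_rfl
      exact Finset.sum_le_sum fun i _ => by
        have := hz i
        nlinarith [abs_nonneg ((z i).im), abs_nonneg (η i), _root_.sq_abs ((z i).im), _root_.sq_abs (η i)]
    have hE := hEdiff z (lt_of_le_of_lt himz hγδ)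
    refine DifferentiableAt.mul ?_ ?_
    · exact (((differentiableAt_const _).mul hE)).cexp
    · refine DifferentiableAt.cexp ?_
      refine (differentiableAt_const _).mul ?_
      refine DifferentiableAt.fun_sum fun i _ => ?_
      exact ((ContinuousLinearMap.proj i : (Fin d → ℂ) →L[ℂ] ℂ).differentiableAt).mul_const _
  -- periodicity of F in each coordinate
  have hFper : ∀ (z : Fin d → ℂ) (j : Fin d),
      F (Function.update z j (z j + 2 * Real.pi)) = F z := by
    intro z j
    have hEz : E (Function.update z j (z j + 2 * Real.pi)) = E z := by
      have := hper z (Pi.single j 1)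
      rw [← this]
      congr 1
      funext i
      by_cases hij : i = j
      · subst hij
        simp [Function.update_self, Pi.single_eq_same]
      · simp [Function.update_of_ne hij, Pi.single_eq_of_ne hij]
    have hsum : ∑ i, Function.update z j (z j + 2 * Real.pi) i * ((x' i - x i : ℤ) : ℂ)
        = (∑ i, z i * ((x' i - x i : ℤ) : ℂ)) + 2 * Real.pi * ((x' j - x j : ℤ) : ℂ) := by
      have : ∀ i : Fin d, Function.update z j (z j + 2 * Real.pi) i * ((x' i - x i : ℤ) : ℂ)
          = z i * ((x' i - x i : ℤ) : ℂ)
            + (if i = j then 2 * Real.pi * ((x' i - x i : ℤ) : ℂ) else 0) := by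
        intro i
        by_cases hij : i = j
        · subst hij
          rw [Function.update_self, if_pos rfl]
          ring
        · rw [Function.update_of_ne hij, if_neg hij, add_zero]
      rw [Finset.sum_congr rfl fun i _ => this i, Finset.sum_add_distrib,
        Finset.sum_ite_eq' Finset.univ j]
      simp
    rw [hF]
    simp only [hEz, hsum]
    rw [mul_add, Complex.exp_add]
    have h1 : Complex.exp (Complex.I * (2 * Real.pi * ((x' j - x j : ℤ) : ℂ))) = 1 := by
      rw [show Complex.I * (2 * Real.pi * ((x' j - x j : ℤ) : ℂ))
          = ((x' j - x j : ℤ) : ℂ) * (2 * Real.pi * Complex.I) by ring]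
      exact Complex.exp_int_mul_two_pi_mul_I _
    rw [h1, mul_one]
  -- contour shift
  have hshift := shift_all F η hFdiff hFper Finset.univ
  simp only [Finset.mem_univ, if_true, Complex.ofReal_zero, zero_mul, add_zero] at hshift
  -- pointwise bound on the shifted contour
  have hbound : ∀ k : Fin d → ℝ,
      ‖F (fun i => (k i : ℂ) + (η i : ℂ) * Complex.I)‖
        ≤ Real.exp (t * c) * Real.exp (-γ₁ * N) := by
    intro k
    set z : Fin d → ℂ := fun i => (k i : ℂ) + (η i : ℂ) * Complex.I with hz
    have hnorm : ‖F z‖ = Real.exp ((-Complex.I * t * E z).re)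
        * Real.exp ((Complex.I * ∑ i, z i * ((x' i - x i : ℤ) : ℂ)).re) := by
      rw [hF]
      simp [Complex.norm_exp]
    have hre1 : (-Complex.I * t * E z).re = t * (E z).im := by
      simp [Complex.mul_re, Complex.mul_im]
    have hre2 : (Complex.I * ∑ i, z i * ((x' i - x i : ℤ) : ℂ)).re
        = -(γ₁ * N) := by
      rw [show (Complex.I * ∑ i, z i * ((x' i - x i : ℤ) : ℂ)).re
          = -(∑ i, z i * ((x' i - x i : ℤ) : ℂ)).im by simp [Complex.mul_re]]
      rw [Complex.im_sum]
      rw [show ∑ i, (z i * ((x' i - x i : ℤ) : ℂ)).im = ∑ i, η i * y i from ?_, hη_dot]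
      refine Finset.sum_congr rfl fun i _ => ?_
      rw [hz, hy]
      simp [Complex.mul_im]
    have him : (E z).im ≤ c := by
      have := hc k (fun i => (η i : ℂ) * Complex.I) ?_
      · refine le_trans (le_abs_self _) ?_
        convert this using 3
      · rw [imNorm]
        convert hη_sq using 2
        refine Finset.sum_congr rfl fun i _ => ?_
        simp
    rw [hnorm, hre1, hre2]
    have h1 : Real.exp (t * (E z).im) ≤ Real.exp (t * c) :=
      Real.exp_le_exp.mpr (mul_le_mul_of_nonneg_left him ht)
    have h2 : Real.exp (-(γ₁ * N)) = Real.exp (-γ₁ * N) := by ring_nf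
    rw [h2]
    exact mul_le_mul h1 le_rfl (Real.exp_pos _).le (Real.exp_pos _).le
  -- measure of the torus
  have hvol : volume S = ENNReal.ofReal ((2 * Real.pi) ^ d) := by
    rw [hS, volume_pi_pi]
    simp only [Real.volume_Icc, show Real.pi - -Real.pi = 2 * Real.pi by ring]
    rw [Finset.prod_const, ← ENNReal.ofReal_pow (by positivity), Finset.card_univ,
      Fintype.card_fin]
  have hvol_lt : volume S < ⊤ := by rw [hvol]; exact ENNReal.ofReal_lt_top
  have hvol_toReal : (volume S).toReal = (2 * Real.pi) ^ d := by
    rw [hvol, ENNReal.toReal_ofReal (by positivity)]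
  -- assemble
  have hmain : ‖∫ k in S, F (fun i => (k i : ℂ))‖
      ≤ (2 * Real.pi) ^ d * (Real.exp (t * c) * Real.exp (-γ₁ * N)) := by
    rw [← hshift]
    calc ‖∫ k in S, F (fun i => (k i : ℂ) + (η i : ℂ) * Complex.I)‖
        ≤ (volume S).toReal * (Real.exp (t * c) * Real.exp (-γ₁ * N)) :=
          by
            have := norm_setIntegral_le_of_norm_le_const hvol_lt
              (fun k _ => hbound k)
            rw [mul_comm] at this
            exact this
      _ = (2 * Real.pi) ^ d * (Real.exp (t * c) * Real.exp (-γ₁ * N)) := by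
          rw [hvol_toReal]
  have htwopi : (0:ℝ) < (2 * Real.pi) ^ d := by positivity
  rw [norm_smul]
  have : ‖((2 * Real.pi : ℝ) ^ d)⁻¹‖ = ((2 * Real.pi) ^ d)⁻¹ := by
    rw [Real.norm_eq_abs, abs_inv, abs_of_pos htwopi]
  rw [this]
  calc ((2 * Real.pi) ^ d)⁻¹ * ‖∫ k in S, F (fun i => (k i : ℂ))‖
      ≤ ((2 * Real.pi) ^ d)⁻¹ * ((2 * Real.pi) ^ d * (Real.exp (t * c) * Real.exp (-γ₁ * N))) :=
        mul_le_mul_of_nonneg_left hmain (by positivity)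
    _ = Real.exp (t * c) * Real.exp (-γ₁ * N) := by field_simp
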